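/- For every binary word x, the maximum 2D rectangular lattice fold score satisfies J(x1) ≤ J(x) and J(1x) ≤ J(x), where x1 (resp. 1x) denotes appending (resp. prepending) the letter 1 to x. -/
import Mathlib


/-- L¹ distance on ℤ². -/
def d2 (p q : ℤ × ℤ) : ℕ := (p.1 - q.1).natAbs + (p.2 - q.2).natAbs

/-- Adjacency in the 2D rectangular lattice. -/
def adj2 (p q : ℤ × ℤ) : Prop := d2 p q = 1

/-- Adjacency in the hexagonal (3-regular, brick-wall) lattice. -/
def hexAdj (p q : ℤ × ℤ) : Prop :=
  (p.2 = q.2 ∧ (p.1 - q.1).natAbs = 1) ∨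
  (p.1 = q.1 ∧ ((q.2 = p.2 + 1 ∧ (p.1 + p.2) % 2 = 0) ∨ (p.2 = q.2 + 1 ∧ (q.1 + q.2) % 2 = 0)))

/-- A fold (self-avoiding walk) of a binary word `w` on a lattice with adjacency `A`:
letters `false` = hydrophobic (0), `true` = polar (1). -/
def IsFold (A : ℤ × ℤ → ℤ × ℤ → Prop) (w : List Bool) (F : Fin w.length → ℤ × ℤ) : Prop :=
  Function.Injective F ∧
    ∀ (i : ℕ) (h : i + 1 < w.length), A (F ⟨i, by omega⟩) (F ⟨i + 1, h⟩)

/-- The score of a fold: the number of (unordered) pairs of non-consecutive positions,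
both labeled 0, whose images are adjacent. -/
noncomputable def score (A : ℤ × ℤ → ℤ × ℤ → Prop) (w : List Bool) (F : Fin w.length → ℤ × ℤ) : ℕ :=
  Set.ncard {p : Fin w.length × Fin w.length |
    p.1.1 + 2 ≤ p.2.1 ∧ w.get p.1 = false ∧ w.get p.2 = false ∧ A (F p.1) (F p.2)}

/-- The optimal score over all folds of `w`. -/
noncomputable def J (A : ℤ × ℤ → ℤ × ℤ → Prop) (w : List Bool) : ℕ :=
  sSup {s | ∃ F, IsFold A w F ∧ score A w F = s}


/-- Appending or prepending the letter 1 cannot increase the optimal 2D rectangular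
fold score: `J(x1) ≤ J(x)` and `J(1x) ≤ J(x)`. -/
lemma score_bdd (A : ℤ × ℤ → ℤ × ℤ → Prop) (w : List Bool) :
    BddAbove {s | ∃ F, IsFold A w F ∧ score A w F = s} := by
  refine ⟨w.length * w.length, ?_⟩
  rintro s ⟨F, _, rfl⟩
  calc score A w F ≤ (Set.univ : Set (Fin w.length × Fin w.length)).ncard :=
        Set.ncard_le_ncard (Set.subset_univ _) Set.finite_univ
    _ = w.length * w.length := by
        simp [Set.ncard_univ, Nat.card_eq_fintype_card]

theorem stmt7 (x : List Bool) :
    J adj2 (x ++ [true]) ≤ J adj2 x ∧ J adj2 ([true] ++ x) ≤ J adj2 x := by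
  constructor
  · apply csSup_le'
    rintro s ⟨F, hF, rfl⟩
    have hlen : (x ++ [true]).length = x.length + 1 := by simp
    rcases Nat.eq_zero_or_pos x.length with hn | hn
    · have hempty : score adj2 (x ++ [true]) F = 0 := by
        rw [score, Set.ncard_eq_zero]
        ext p
        simp only [Set.mem_setOf_eq, Set.mem_empty_iff_false, iff_false]
        rintro ⟨h1, -, -, -⟩
        have := p.2.isLt
        omega
      simp [hempty]
    set G : Fin x.length → ℤ × ℤ := fun i => F ⟨i.1, by have := i.isLt; omega⟩ with hG
    have hGfold : IsFold adj2 x G := by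
      constructor
      · intro a b hab
        have h := hF.1 hab
        simp only [Fin.mk.injEq] at h
        exact Fin.ext h
      · intro i h
        exact hF.2 i (by omega)
    have hlt2 : ∀ p : Fin (x ++ [true]).length × Fin (x ++ [true]).length,
        p ∈ {p : Fin (x ++ [true]).length × Fin (x ++ [true]).length |
          p.1.1 + 2 ≤ p.2.1 ∧ (x ++ [true]).get p.1 = false ∧ (x ++ [true]).get p.2 = false ∧
          adj2 (F p.1) (F p.2)} → p.2.1 < x.length := by
      rintro p ⟨-, -, h2, -⟩
      rcases Nat.lt_or_ge p.2.1 x.length with h | h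
      · exact h
      · exfalso
        have hv : p.2.1 = x.length := by have := p.2.isLt; omega
        rw [List.get_eq_getElem] at h2
        simp [hv] at h2
    have hscore : score adj2 (x ++ [true]) F ≤ score adj2 x G := by
      apply Set.ncard_le_ncard_of_injOn
        (f := fun p => (⟨p.1.1 % x.length, Nat.mod_lt _ hn⟩, ⟨p.2.1 % x.length, Nat.mod_lt _ hn⟩))
      · rintro p hp
        have h2 : p.2.1 < x.length := hlt2 p hp
        obtain ⟨ha, hb, hc, hd⟩ := hp
        have h1 : p.1.1 < x.length := by omega
        refine ⟨?_, ?_, ?_, ?_⟩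
        · simp only [Nat.mod_eq_of_lt h1, Nat.mod_eq_of_lt h2]; exact ha
        · rw [List.get_eq_getElem]
          simp only [Nat.mod_eq_of_lt h1]
          rw [List.get_eq_getElem] at hb
          simp only [List.getElem_append, h1, dif_pos] at hb
          exact hb
        · rw [List.get_eq_getElem]
          simp only [Nat.mod_eq_of_lt h2]
          rw [List.get_eq_getElem] at hc
          simp only [List.getElem_append, h2, dif_pos] at hc
          exact hc
        · convert hd using 2 <;>
            exact Fin.ext (by simp [Nat.mod_eq_of_lt h1, Nat.mod_eq_of_lt h2])
      · rintro p hp q hq hfpq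
        have hp2 := hlt2 p hp
        have hq2 := hlt2 q hq
        have hp1 : p.1.1 < x.length := by obtain ⟨ha, -, -, -⟩ := hp; omega
        have hq1 : q.1.1 < x.length := by obtain ⟨ha, -, -, -⟩ := hq; omega
        have e1 := congrArg (fun z => z.1.1) hfpq
        have e2 := congrArg (fun z => z.2.1) hfpq
        simp only [Nat.mod_eq_of_lt, hp1, hp2, hq1, hq2] at e1 e2
        exact Prod.ext (Fin.ext e1) (Fin.ext e2)
    exact hscore.trans (le_csSup (score_bdd _ _) ⟨G, hGfold, rfl⟩)
  · apply csSup_le'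
    rintro s ⟨F, hF, rfl⟩
    have hlen : ([true] ++ x).length = x.length + 1 := by simp
    rcases Nat.eq_zero_or_pos x.length with hn | hn
    · have hempty : score adj2 ([true] ++ x) F = 0 := by
        rw [score, Set.ncard_eq_zero]
        ext p
        simp only [Set.mem_setOf_eq, Set.mem_empty_iff_false, iff_false]
        rintro ⟨h1, -, -, -⟩
        have := p.2.isLt
        omega
      rw [hempty]; exact Nat.zero_le _
    set G : Fin x.length → ℤ × ℤ := fun i => F ⟨i.1 + 1, by have := i.isLt; omega⟩ with hG
    have hGfold : IsFold adj2 x G := by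
      constructor
      · intro a b hab
        have h := hF.1 hab
        simp only [Fin.mk.injEq] at h
        exact Fin.ext (by omega)
      · intro i h
        exact hF.2 (i + 1) (by omega)
    have hge1 : ∀ p : Fin ([true] ++ x).length × Fin ([true] ++ x).length,
        p ∈ {p : Fin ([true] ++ x).length × Fin ([true] ++ x).length |
          p.1.1 + 2 ≤ p.2.1 ∧ ([true] ++ x).get p.1 = false ∧ ([true] ++ x).get p.2 = false ∧
          adj2 (F p.1) (F p.2)} → 1 ≤ p.1.1 := by
      rintro p ⟨-, h2, -, -⟩
      rcases Nat.eq_zero_or_pos p.1.1 with h | h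
      · exfalso
        rw [List.get_eq_getElem] at h2
        simp [h] at h2
      · exact h
    have hscore : score adj2 ([true] ++ x) F ≤ score adj2 x G := by
      apply Set.ncard_le_ncard_of_injOn
        (f := fun p => (⟨p.1.1 - 1, by have := p.1.isLt; omega⟩,
                        ⟨p.2.1 - 1, by have := p.2.isLt; omega⟩))
      · rintro p hp
        have h1 : 1 ≤ p.1.1 := hge1 p hp
        obtain ⟨ha, hb, hc, hd⟩ := hp
        simp only [Set.mem_setOf_eq]
        refine ⟨by omega, ?_, ?_, ?_⟩
        · obtain ⟨j, hj⟩ : ∃ j, p.1.1 = j + 1 := ⟨p.1.1 - 1, by omega⟩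
          rw [List.get_eq_getElem] at hb ⊢
          simp only [hj, List.singleton_append, List.getElem_cons_succ] at hb
          have hj' : p.1.1 - 1 = j := by omega
          simp only [hj']
          exact hb
        · have h2 : 1 ≤ p.2.1 := by omega
          obtain ⟨j, hj⟩ : ∃ j, p.2.1 = j + 1 := ⟨p.2.1 - 1, by omega⟩
          rw [List.get_eq_getElem] at hc ⊢
          simp only [hj, List.singleton_append, List.getElem_cons_succ] at hc
          have hj' : p.2.1 - 1 = j := by omega
          simp only [hj']
          exact hc
        · convert hd using 2 <;> exact Fin.ext (by simp; try omega)
      · rintro p hp q hq hfpq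
        have hp1 := hge1 p hp
        have hq1 := hge1 q hq
        have hp2 : 1 ≤ p.2.1 := by obtain ⟨ha, -, -, -⟩ := hp; omega
        have hq2 : 1 ≤ q.2.1 := by obtain ⟨ha, -, -, -⟩ := hq; omega
        have e1 := congrArg (fun z => z.1.1) hfpq
        have e2 := congrArg (fun z => z.2.1) hfpq
        simp only at e1 e2
        refine Prod.ext (Fin.ext ?_) (Fin.ext ?_) <;> omega
    exact hscore.trans (le_csSup (score_bdd _ _) ⟨G, hGfold, rfl⟩)
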